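/- Let H, G : ℝ → ℝ be bounded measurable functions with H(f) + G(f) = 1 for all f, and let S : ℝ → ℝ be integrable on [−1/2, 1/2]. If C_J → 0 as J → ∞, then for every integer J ≥ 1 the tail of the wavelet covariance series equals the scaling covariance one level below: ∑_{j=J}^{∞} γ_j = C_{J−1}. -/

import Mathlib

open Finset MeasureTheory Filter

/-- The level-`J` scaling covariance
`C_J = ∫_{−1/2}^{1/2} (∏_{l=0}^{J−1} G(2^l f)) S(f) df`. -/
noncomputable def scalingCov (G S : ℝ → ℝ) (J : ℕ) : ℝ :=
  ∫ f in (-(1 : ℝ) / 2)..(1 / 2), (∏ l ∈ Finset.range J, G ((2 : ℝ) ^ l * f)) * S f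

/-- The level-`J` wavelet covariance
`γ_J = ∫_{−1/2}^{1/2} H(2^{J−1} f) (∏_{l=0}^{J−2} G(2^l f)) S(f) df`. -/
noncomputable def waveletCov (H G S : ℝ → ℝ) (J : ℕ) : ℝ :=
  ∫ f in (-(1 : ℝ) / 2)..(1 / 2),
    H ((2 : ℝ) ^ (J - 1) * f) * (∏ l ∈ Finset.range (J - 1), G ((2 : ℝ) ^ l * f)) * S f

lemma bdd_mul_intervalIntegrable (S : ℝ → ℝ)
    (hS : IntervalIntegrable S volume (-(1 : ℝ) / 2) (1 / 2))
    (φ : ℝ → ℝ) (hφ : Measurable φ) (C : ℝ) (hC : ∀ f, |φ f| ≤ C) :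
    IntervalIntegrable (fun f => φ f * S f) volume (-(1 : ℝ) / 2) (1 / 2) := by
  constructor
  · exact hS.1.bdd_mul hφ.aestronglyMeasurable.restrict (Eventually.of_forall fun x => hC x)
  · exact hS.2.bdd_mul hφ.aestronglyMeasurable.restrict (Eventually.of_forall fun x => hC x)

lemma prod_G_bdd (G : ℝ → ℝ) (C : ℝ) (hC : ∀ f, |G f| ≤ C) (n : ℕ) (f : ℝ) :
    |∏ l ∈ Finset.range n, G ((2 : ℝ) ^ l * f)| ≤ C ^ n := by
  rw [Finset.abs_prod]
  calc ∏ l ∈ Finset.range n, |G ((2 : ℝ) ^ l * f)| ≤ ∏ l ∈ Finset.range n, C :=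
        Finset.prod_le_prod (fun i _ => abs_nonneg _) (fun i _ => hC _)
    _ = C ^ n := by simp

lemma waveletCov_eq_sub (H G S : ℝ → ℝ)
    (hHmeas : Measurable H) (hGmeas : Measurable G)
    (hHbd : ∃ C : ℝ, ∀ f : ℝ, |H f| ≤ C) (hGbd : ∃ C : ℝ, ∀ f : ℝ, |G f| ≤ C)
    (hHG : ∀ f : ℝ, H f + G f = 1)
    (hS : IntervalIntegrable S volume (-(1 : ℝ) / 2) (1 / 2))
    (j : ℕ) (hj : 1 ≤ j) :
    waveletCov H G S j = scalingCov G S (j - 1) - scalingCov G S j := by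
  obtain ⟨C, hC⟩ := hGbd
  have hmeas : ∀ n : ℕ, Measurable fun f : ℝ => ∏ l ∈ Finset.range n, G ((2 : ℝ) ^ l * f) := by
    intro n
    exact Finset.measurable_prod _ (fun l _ => hGmeas.comp (measurable_const.mul measurable_id))
  have hint : ∀ n : ℕ, IntervalIntegrable
      (fun f => (∏ l ∈ Finset.range n, G ((2 : ℝ) ^ l * f)) * S f)
      volume (-(1 : ℝ) / 2) (1 / 2) := fun n =>
    bdd_mul_intervalIntegrable S hS _ (hmeas n) (C ^ n) (prod_G_bdd G C hC n)
  have key : ∀ f : ℝ,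
      H ((2 : ℝ) ^ (j - 1) * f) * (∏ l ∈ Finset.range (j - 1), G ((2 : ℝ) ^ l * f)) * S f
      = (∏ l ∈ Finset.range (j - 1), G ((2 : ℝ) ^ l * f)) * S f
        - (∏ l ∈ Finset.range j, G ((2 : ℝ) ^ l * f)) * S f := by
    intro f
    have hH : H ((2 : ℝ) ^ (j - 1) * f) = 1 - G ((2 : ℝ) ^ (j - 1) * f) := by
      have := hHG ((2 : ℝ) ^ (j - 1) * f); linarith
    have hprod : ∏ l ∈ Finset.range j, G ((2 : ℝ) ^ l * f)
        = (∏ l ∈ Finset.range (j - 1), G ((2 : ℝ) ^ l * f)) * G ((2 : ℝ) ^ (j - 1) * f) := by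
      conv_lhs => rw [show j = (j - 1) + 1 from (Nat.succ_pred_eq_of_pos hj).symm]
      rw [Finset.prod_range_succ]
    rw [hH, hprod]; ring
  unfold waveletCov scalingCov
  rw [← intervalIntegral.integral_sub (hint (j - 1)) (hint j)]
  exact intervalIntegral.integral_congr (fun f _ => key f)

/-- For bounded measurable `H, G` with `H + G = 1` and `S` integrable on `[−1/2, 1/2]`:
if `C_J → 0` as `J → ∞`, then for every `J ≥ 1` the tail of the wavelet covariance series
equals the scaling covariance one level below: `∑_{j=J}^∞ γ_j = C_{J−1}`. -/
theorem tail_waveletCov_eq_scalingCov (H G S : ℝ → ℝ)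
    (hHmeas : Measurable H) (hGmeas : Measurable G)
    (hHbd : ∃ C : ℝ, ∀ f : ℝ, |H f| ≤ C) (hGbd : ∃ C : ℝ, ∀ f : ℝ, |G f| ≤ C)
    (hHG : ∀ f : ℝ, H f + G f = 1)
    (hS : IntervalIntegrable S volume (-(1 : ℝ) / 2) (1 / 2))
    (hC0 : Tendsto (fun J : ℕ => scalingCov G S J) atTop (nhds 0))
    (J : ℕ) (hJ : 1 ≤ J) :
    Tendsto (fun M : ℕ => ∑ j ∈ Finset.Icc J M, waveletCov H G S j) atTop
      (nhds (scalingCov G S (J - 1))) := by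
  have hsum : ∀ M : ℕ, J ≤ M → ∑ j ∈ Finset.Icc J M, waveletCov H G S j
      = scalingCov G S (J - 1) - scalingCov G S M := by
    intro M hM
    induction M, hM using Nat.le_induction with
    | base =>
      rw [Finset.Icc_self, Finset.sum_singleton,
        waveletCov_eq_sub H G S hHmeas hGmeas hHbd hGbd hHG hS J hJ]
    | succ M hM ih =>
      rw [Finset.sum_Icc_succ_top (le_trans hM (Nat.le_succ M)), ih,
        waveletCov_eq_sub H G S hHmeas hGmeas hHbd hGbd hHG hS (M + 1) (Nat.le_add_left 1 M)]
      have h1 : M + 1 - 1 = M := by omega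
      rw [h1]; ring
  have h2 : Tendsto (fun M : ℕ => scalingCov G S (J - 1) - scalingCov G S M) atTop
      (nhds (scalingCov G S (J - 1))) := by
    simpa using (tendsto_const_nhds (x := scalingCov G S (J - 1)) (f := atTop (α := ℕ))).sub hC0
  refine Tendsto.congr' ?_ h2
  filter_upwards [eventually_ge_atTop J] with M hM
  exact (hsum M hM).symm
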